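/- There exists an absolute constant c > 0 such that the following holds: for every ε ∈ (0,1/3), every integer k ≥ 1, every d×k real matrix V with orthonormal columns, and every t ≥ c·k/ε², if R is a d×t random matrix whose entries are i.i.d., each equal to +1/√t or −1/√t with probability 1/2, then with probability at least 0.99, every singular value σ_i(VᵀR), i ∈ [k], of the k×t matrix VᵀR satisfies |1 − σ_i(VᵀR)| ≤ ε. -/

import Mathlib

open MeasureTheory
open scoped Matrix

/-- Frobenius norm of a real matrix. -/
noncomputable def frobNorm {m n : ℕ} (M : Matrix (Fin m) (Fin n) ℝ) : ℝ :=
  Real.sqrt (∑ i, ∑ j, (M i j) ^ 2)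

/-- Spectral (operator) norm of a real matrix, viewed as a linear map between
Euclidean spaces. -/
noncomputable def specNorm {m n : ℕ} (M : Matrix (Fin m) (Fin n) ℝ) : ℝ :=
  ‖LinearMap.toContinuousLinearMap (Matrix.toEuclideanLin M)‖

/-- `P` is the Moore–Penrose pseudoinverse of `M` (the four Penrose conditions;
such a `P` is unique). -/
def IsMoorePenrose {m n : ℕ} (M : Matrix (Fin m) (Fin n) ℝ)
    (P : Matrix (Fin n) (Fin m) ℝ) : Prop :=
  M * P * M = M ∧ P * M * P = P ∧ (M * P)ᵀ = M * P ∧ (P * M)ᵀ = P * M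

/-- `X` is an `n × k` cluster indicator matrix: each row `i` has a single nonzero
entry, in column `f i`, equal to `1/√(z_{f i})` where `z_j` is the number of rows
assigned to column `j`. -/
def IsIndicator {n k : ℕ} (X : Matrix (Fin n) (Fin k) ℝ) : Prop :=
  ∃ f : Fin n → Fin k, ∀ i j, X i j =
    if f i = j then 1 / Real.sqrt ((Finset.univ.filter fun i' => f i' = j).card) else 0

/-- The singular values of a `k × t` real matrix `M` (in some order): the square
roots of the eigenvalues of `M * Mᵀ`. -/
noncomputable def singVals {k t : ℕ} (M : Matrix (Fin k) (Fin t) ℝ) (i : Fin k) : ℝ :=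
  Real.sqrt ((Matrix.isHermitian_mul_conjTranspose_self M).eigenvalues i)

/-- The `d × t` random sign matrix with entries `±1/√t`, as a function of the
sample point `ω` (a `d × t` array of fair coins). -/
noncomputable def signMatrix (d t : ℕ) (ω : Fin d → Fin t → Bool) :
    Matrix (Fin d) (Fin t) ℝ :=
  Matrix.of fun i j => (if ω i j then (1 : ℝ) else -1) / Real.sqrt t

/-- The law of a `d × t` matrix of i.i.d. fair signs: the uniform probability
measure on all `d × t` sign patterns. -/
noncomputable def signMeasure (d t : ℕ) : Measure (Fin d → Fin t → Bool) :=
  (PMF.uniformOfFintype (Fin d → Fin t → Bool)).toMeasure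


open Finset Metric
open scoped ENNReal

noncomputable section

/-- Key combinatorial inequality: `C(2p,2m) ≤ 2^m * m! * C(p,m)^2` for `m ≤ p`. -/
lemma choose_sq_ineq (p : ℕ) : ∀ m, m ≤ p →
    Nat.choose (2*p) (2*m) ≤ 2^m * Nat.factorial m * (Nat.choose p m)^2 := by
  intro m
  induction m with
  | zero => intro _; simp
  | succ m ih =>
    intro hm
    have hm' : m ≤ p := le_of_lt (Nat.lt_of_succ_le hm)
    have IH := ih hm'
    -- recurrences
    have r1 : Nat.choose (2*p) (2*m+1) * (2*m+1) = Nat.choose (2*p) (2*m) * (2*p - 2*m) :=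
      Nat.choose_succ_right_eq _ _
    have r2 : Nat.choose (2*p) (2*m+2) * (2*m+2) = Nat.choose (2*p) (2*m+1) * (2*p - (2*m+1)) :=
      Nat.choose_succ_right_eq _ _
    have r3 : Nat.choose p (m+1) * (m+1) = Nat.choose p m * (p - m) :=
      Nat.choose_succ_right_eq _ _
    -- goal: C(2p, 2(m+1)) ≤ 2^(m+1) (m+1)! C(p,m+1)^2
    have h2m : 2*(m+1) = 2*m+2 := by ring
    rw [h2m]
    -- multiply both sides by (2m+2)(2m+1)(m+1) > 0 ... work multiplicatively
    have hpos : 0 < (2*m+2)*(2*m+1) := by positivity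
    apply Nat.le_of_mul_le_mul_right _ hpos
    -- LHS * (2m+2)(2m+1) = C(2p,2m) * (2p-2m) * (2p-2m-1)
    have lhs_eq : Nat.choose (2*p) (2*m+2) * ((2*m+2)*(2*m+1))
        = Nat.choose (2*p) (2*m) * ((2*p - 2*m) * (2*p - (2*m+1))) := by
      calc Nat.choose (2*p) (2*m+2) * ((2*m+2)*(2*m+1))
          = (Nat.choose (2*p) (2*m+2) * (2*m+2)) * (2*m+1) := by ring
        _ = (Nat.choose (2*p) (2*m+1) * (2*p - (2*m+1))) * (2*m+1) := by rw [r2]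
        _ = (Nat.choose (2*p) (2*m+1) * (2*m+1)) * (2*p - (2*m+1)) := by ring
        _ = (Nat.choose (2*p) (2*m) * (2*p - 2*m)) * (2*p - (2*m+1)) := by rw [r1]
        _ = _ := by ring
    rw [lhs_eq]
    -- RHS * (2m+2)(2m+1) with C(p,m+1)^2 (m+1)^2 = C(p,m)^2 (p-m)^2
    have rhs_eq : 2^(m+1) * Nat.factorial (m+1) * (Nat.choose p (m+1))^2 * ((2*m+2)*(2*m+1)) * (m+1)
        = 2^m * Nat.factorial m * (Nat.choose p m)^2 * ((p-m)^2 * (4*(2*m+1)*(m+1))) := by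
      have : (Nat.choose p (m+1))^2 * (m+1)^2 = (Nat.choose p m)^2 * (p-m)^2 := by
        have := congrArg (fun x => x^2) r3; simpa [mul_pow] using this
      calc 2^(m+1) * Nat.factorial (m+1) * (Nat.choose p (m+1))^2 * ((2*m+2)*(2*m+1)) * (m+1)
          = ((Nat.choose p (m+1))^2 * (m+1)^2) * (2^(m+1) * Nat.factorial (m+1) * (2*(2*m+1))) := by ring
        _ = ((Nat.choose p m)^2 * (p-m)^2) * (2^(m+1) * Nat.factorial (m+1) * (2*(2*m+1))) := by rw [this]
        _ = _ := by rw [Nat.factorial_succ]; ring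
    -- reduce to: C(2p,2m) * ((2p-2m)*(2p-2m-1)) * (m+1) ≤ RHS
    apply Nat.le_of_mul_le_mul_right _ (Nat.succ_pos m)
    rw [rhs_eq]
    -- bound (2p-2m)(2p-(2m+1))(m+1) ≤ (p-m)^2 * 4(2m+1)(m+1)
    have hb : (2*p - 2*m) * (2*p - (2*m+1)) * (m+1) ≤ (p-m)^2 * (4*(2*m+1)*(m+1)) := by
      have e1 : 2*p - 2*m = 2*(p-m) := by omega
      have e2 : 2*p - (2*m+1) ≤ 2*(p-m) := by omega
      calc (2*p - 2*m) * (2*p - (2*m+1)) * (m+1)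
          ≤ (2*(p-m)) * (2*(p-m)) * (m+1) := by
            rw [e1]; exact Nat.mul_le_mul_right _ (Nat.mul_le_mul_left _ e2)
        _ = (p-m)^2 * 4 * (m+1) := by ring
        _ ≤ (p-m)^2 * (4*(2*m+1)*(m+1)) := by
            have : 4*(m+1) ≤ 4*(2*m+1)*(m+1) := by nlinarith
            calc (p-m)^2*4*(m+1) = (p-m)^2*(4*(m+1)) := by ring
              _ ≤ _ := Nat.mul_le_mul_left _ this
    calc Nat.choose (2*p) (2*m) * ((2*p - 2*m) * (2*p - (2*m+1))) * (m+1)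
        ≤ (2^m * Nat.factorial m * (Nat.choose p m)^2) * ((2*p - 2*m) * (2*p - (2*m+1))) * (m+1) := by
          exact Nat.mul_le_mul_right _ (Nat.mul_le_mul_right _ IH)
      _ = (2^m * Nat.factorial m * (Nat.choose p m)^2) * ((2*p - 2*m) * (2*p - (2*m+1)) * (m+1)) := by ring
      _ ≤ (2^m * Nat.factorial m * (Nat.choose p m)^2) * ((p-m)^2 * (4*(2*m+1)*(m+1))) := Nat.mul_le_mul_left _ hb
      _ = _ := by ring

/-- Termwise inequality used in the moment induction, in ℝ. -/
lemma key_term_ineq (p m : ℕ) (h : m ≤ p) :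
    (Nat.choose (2*p) (2*m) : ℝ) * (2^(p-m) * Nat.factorial (p-m)) ≤
      (Nat.choose p m : ℝ) * (2^p * Nat.factorial p) := by
  have hfac : (Nat.factorial p : ℝ) = Nat.choose p m * Nat.factorial m * Nat.factorial (p-m) := by
    exact_mod_cast (Nat.choose_mul_factorial_mul_factorial h).symm
  have h1 : (Nat.choose (2*p) (2*m) : ℝ) ≤ 2^m * Nat.factorial m * (Nat.choose p m)^2 := by
    exact_mod_cast choose_sq_ineq p m h
  have h2 : (0:ℝ) ≤ 2^(p-m) * Nat.factorial (p-m) := by positivity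
  calc (Nat.choose (2*p) (2*m) : ℝ) * (2^(p-m) * Nat.factorial (p-m))
      ≤ (2^m * Nat.factorial m * (Nat.choose p m)^2) * (2^(p-m) * Nat.factorial (p-m)) :=
        mul_le_mul_of_nonneg_right h1 h2
    _ = (Nat.choose p m : ℝ) * ((2^m * 2^(p-m)) * (Nat.choose p m * Nat.factorial m * Nat.factorial (p-m))) := by ring
    _ = (Nat.choose p m : ℝ) * (2^p * Nat.factorial p) := by
        rw [← pow_add, Nat.add_sub_cancel' h, ← hfac]

/-- sign value of a boolean -/
def sg (b : Bool) : ℝ := if b then 1 else -1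

lemma sg_sq (b : Bool) : sg b ^ 2 = 1 := by cases b <;> simp [sg]

lemma sg_pow_even (b : Bool) (m : ℕ) : sg b ^ (2*m) = 1 := by
  rw [pow_mul, sg_sq, one_pow]

/-- weighted sign sum -/
def zval {d : ℕ} (w : Fin d → ℝ) (v : Fin d → Bool) : ℝ := ∑ i, w i * sg (v i)

/-- Sum over a function space factorizes over products. -/
lemma sum_pi_prod {ι V : Type*} [Fintype ι] [DecidableEq ι] [Fintype V] [DecidableEq V]
    (g : ι → V → ℝ) :
    ∑ h : ι → V, ∏ i, g i (h i) = ∏ i, ∑ v, g i v := by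
  rw [Finset.prod_univ_sum]
  rw [Fintype.piFinset_univ]

/-- Sums over `Fin (d+1) → Bool` split via `Fin.cons`. -/
lemma sum_cons_split {d : ℕ} (f : (Fin (d+1) → Bool) → ℝ) :
    ∑ v : Fin (d+1) → Bool, f v = ∑ b : Bool, ∑ v : Fin d → Bool, f (Fin.cons b v) := by
  classical
  have h1 : ∑ v : Fin (d+1) → Bool, f v
      = ∑ x : Bool × (Fin d → Bool), f (Fin.cons x.1 x.2) :=
    Fintype.sum_equiv ((Fin.consEquiv (fun _ : Fin (d+1) => Bool)).symm) _ _ (fun v => by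
      congr 1
      exact (Fin.cons_self_tail v).symm)
  rw [h1, Fintype.sum_prod_type]
lemma sum_sg_pow (r : ℕ) : ∑ b : Bool, sg b ^ r = if Even r then 2 else 0 := by
  rcases Nat.even_or_odd r with h | h
  · obtain ⟨m, hm⟩ := h
    simp only [if_pos (by exact ⟨m, hm⟩ : Even r)]
    have : ∀ b : Bool, sg b ^ r = 1 := by
      intro b; rw [hm, ← two_mul, pow_mul]
      cases b <;> norm_num [sg]
    simp [this]
  · have h2 : ¬ Even r := by simpa [Nat.even_iff, Nat.odd_iff] using h
    rw [if_neg h2]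
    obtain ⟨m, hm⟩ := h
    have ht : sg true ^ r = 1 := by simp [sg]
    have hf : sg false ^ r = -1 := by
      have : sg false = -1 := by simp [sg]
      rw [this, hm, pow_succ, pow_mul]; norm_num
    simp [Fintype.sum_bool, ht, hf]

/-- drop odd-vanishing terms -/
lemma sum_even_only (F : ℕ → ℝ) (hF : ∀ r, ¬ Even r → F r = 0) (p : ℕ) :
    ∑ r ∈ range (2*p+1), F r = ∑ m ∈ range (p+1), F (2*m) := by
  induction p with
  | zero => simp
  | succ p ih =>
    have h1 : 2*(p+1)+1 = (2*p+1) + 1 + 1 := by ring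
    rw [h1, Finset.sum_range_succ, Finset.sum_range_succ, ih, Finset.sum_range_succ]
    have hodd : F (2*p+1) = 0 := hF _ (by simp [Nat.even_add_one, parity_simps])
    rw [hodd, Finset.sum_range_succ, Finset.sum_range_succ]
    have : 2*(p+1) = 2*p+1+1 := by ring
    rw [this]
    ring


lemma zval_cons {d : ℕ} (w : Fin (d+1) → ℝ) (b : Bool) (v : Fin d → Bool) :
    zval w (Fin.cons b v) = w 0 * sg b + zval (fun i => w i.succ) v := by
  unfold zval
  rw [Fin.sum_univ_succ]
  simp [Fin.cons_succ]

lemma moment_bound : ∀ (d : ℕ) (w : Fin d → ℝ) (p : ℕ),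
    ∑ v : Fin d → Bool, zval w v ^ (2*p)
      ≤ 2^d * (2^p * (Nat.factorial p) * (∑ i, w i ^ 2)^p) := by
  intro d
  induction d with
  | zero =>
    intro w p
    have hz : ∀ v : Fin 0 → Bool, zval w v = 0 := by intro v; simp [zval]
    have hw : (∑ i : Fin 0, w i ^ 2) = 0 := by simp
    rw [hw]
    cases p with
    | zero => simp [hz]
    | succ p =>
      have : ∀ v : Fin 0 → Bool, zval w v ^ (2*(p+1)) = 0 := by
        intro v; rw [hz]; exact zero_pow (by omega)
      simp [this]
  | succ d ih =>
    intro w p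
    set c := w 0 with hc
    set w' : Fin d → ℝ := fun i => w i.succ with hw'
    set σ2 := ∑ i, w' i ^ 2 with hσ2
    have hσ2nn : 0 ≤ σ2 := by positivity
    have expand : ∀ b v, zval w (Fin.cons b v) ^ (2*p)
        = ∑ r ∈ Finset.range (2*p+1),
            (c * sg b)^r * zval w' v ^ (2*p-r) * (Nat.choose (2*p) r : ℝ) := by
      intro b v
      rw [zval_cons]
      exact add_pow (c * sg b) (zval w' v) (2*p)
    have key : ∀ b : Bool, ∑ v : Fin d → Bool, zval w (Fin.cons b v) ^ (2*p)
        = ∑ r ∈ Finset.range (2*p+1),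
            ((Nat.choose (2*p) r : ℝ) * c^r * ∑ v : Fin d → Bool, zval w' v ^ (2*p-r)) * sg b ^ r := by
      intro b
      simp_rw [expand]
      rw [Finset.sum_comm]
      refine Finset.sum_congr rfl (fun r _ => ?_)
      rw [← Finset.sum_mul, ← Finset.mul_sum, mul_pow]
      ring
    have hsplit : ∑ v : Fin (d+1) → Bool, zval w v ^ (2*p)
        = ∑ r ∈ Finset.range (2*p+1),
            (Nat.choose (2*p) r : ℝ) * c^r * (if Even r then (2:ℝ) else 0)
              * ∑ v : Fin d → Bool, zval w' v ^ (2*p - r) := by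
      rw [sum_cons_split]
      simp_rw [key]
      rw [Finset.sum_comm]
      refine Finset.sum_congr rfl (fun r _ => ?_)
      rw [← Finset.mul_sum, sum_sg_pow]
      ring
    rw [hsplit]
    -- restrict to even indices
    rw [sum_even_only _ (fun r hr => by rw [if_neg hr]; ring) p]
    -- bound each term
    have bound : ∀ m ∈ Finset.range (p+1),
        (Nat.choose (2*p) (2*m) : ℝ) * c^(2*m) * (if Even (2*m) then (2:ℝ) else 0)
            * ∑ v : Fin d → Bool, zval w' v ^ (2*p - 2*m)
          ≤ 2^(d+1) * (2^p * (Nat.factorial p)) * ((Nat.choose p m : ℝ) * (c^2)^m * σ2^(p-m)) := by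
      intro m hm
      have hmp : m ≤ p := by
        have := Finset.mem_range.mp hm; omega
      rw [if_pos (even_two_mul m)]
      have hsub : 2*p - 2*m = 2*(p-m) := by omega
      rw [hsub]
      have h1 : ∑ v : Fin d → Bool, zval w' v ^ (2*(p-m))
          ≤ 2^d * (2^(p-m) * (Nat.factorial (p-m)) * σ2^(p-m)) := ih w' (p-m)
      have h1nn : (0:ℝ) ≤ ∑ v : Fin d → Bool, zval w' v ^ (2*(p-m)) := by
        apply Finset.sum_nonneg; intro v _; rw [pow_mul]; positivity
      have hcnn : (0:ℝ) ≤ (Nat.choose (2*p) (2*m) : ℝ) * c^(2*m) * 2 := by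
        rw [pow_mul]; positivity
      calc (Nat.choose (2*p) (2*m) : ℝ) * c^(2*m) * 2 * ∑ v : Fin d → Bool, zval w' v ^ (2*(p-m))
          ≤ (Nat.choose (2*p) (2*m) : ℝ) * c^(2*m) * 2 * (2^d * (2^(p-m) * (Nat.factorial (p-m)) * σ2^(p-m))) :=
            mul_le_mul_of_nonneg_left h1 hcnn
        _ = ((Nat.choose (2*p) (2*m) : ℝ) * (2^(p-m) * (Nat.factorial (p-m)))) * (c^(2*m) * 2 * 2^d * σ2^(p-m)) := by
            ring
        _ ≤ ((Nat.choose p m : ℝ) * (2^p * Nat.factorial p)) * (c^(2*m) * 2 * 2^d * σ2^(p-m)) := by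
            apply mul_le_mul_of_nonneg_right (key_term_ineq p m hmp)
            have : (0:ℝ) ≤ c^(2*m) := by rw [pow_mul]; positivity
            positivity
        _ = 2^(d+1) * (2^p * (Nat.factorial p)) * ((Nat.choose p m : ℝ) * (c^2)^m * σ2^(p-m)) := by
            rw [← pow_mul]
            ring
    calc ∑ m ∈ Finset.range (p+1), (Nat.choose (2*p) (2*m) : ℝ) * c^(2*m) * (if Even (2*m) then (2:ℝ) else 0)
            * ∑ v : Fin d → Bool, zval w' v ^ (2*p - 2*m)
        ≤ ∑ m ∈ Finset.range (p+1),
            2^(d+1) * (2^p * (Nat.factorial p)) * ((Nat.choose p m : ℝ) * (c^2)^m * σ2^(p-m)) :=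
          Finset.sum_le_sum bound
      _ = 2^(d+1) * (2^p * (Nat.factorial p)) * ∑ m ∈ Finset.range (p+1), (c^2)^m * σ2^(p-m) * (Nat.choose p m : ℝ) := by
          rw [Finset.mul_sum]
          exact Finset.sum_congr rfl (fun m _ => by ring)
      _ = 2^(d+1) * (2^p * (Nat.factorial p)) * (c^2 + σ2)^p := by rw [← add_pow]
      _ = 2^(d+1) * (2^p * (Nat.factorial p) * (∑ i, w i ^ 2)^p) := by
          rw [Fin.sum_univ_succ (f := fun i => w i ^ 2)]
          rw [← hσ2, ← hc]
          ring


lemma sum_sg_mul_ne {d : ℕ} (i i' : Fin d) (h : i ≠ i') :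
    ∑ v : Fin d → Bool, sg (v i) * sg (v i') = 0 := by
  classical
  refine Finset.sum_involution (fun v _ => Function.update v i (!v i)) ?_ ?_ (fun v _ => Finset.mem_univ _) ?_
  · intro v _
    have h1 : Function.update v i (!v i) i = !v i := Function.update_self i (!v i) v
    have h2 : Function.update v i (!v i) i' = v i' := Function.update_of_ne (Ne.symm h) _ _
    show sg (v i) * sg (v i') + sg (Function.update v i (!v i) i) * sg (Function.update v i (!v i) i') = 0
    rw [h1, h2]
    have hs : sg (!v i) = - sg (v i) := by cases v i <;> simp [sg]
    rw [hs]; ring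
  · intro v _ _
    intro heq
    have h3 : Function.update v i (!v i) i = v i := congrFun heq i
    rw [Function.update_self] at h3
    cases hv : v i <;> rw [hv] at h3 <;> simp at h3
  · intro v _
    show Function.update (Function.update v i (!v i)) i (!(Function.update v i (!v i) i)) = v
    funext m
    by_cases hm : m = i
    · subst hm; simp
    · simp [Function.update_of_ne hm]

lemma sum_sg_mul {d : ℕ} (i i' : Fin d) :
    ∑ v : Fin d → Bool, sg (v i) * sg (v i') = if i = i' then (2:ℝ)^d else 0 := by
  by_cases h : i = i'
  · subst h
    rw [if_pos rfl]
    have : ∀ v : Fin d → Bool, sg (v i) * sg (v i) = 1 := by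
      intro v; cases v i <;> simp [sg]
    rw [Finset.sum_congr rfl (fun v _ => this v), Finset.sum_const]
    simp [Fintype.card_fun]
  · rw [if_neg h, sum_sg_mul_ne i i' h]

lemma sum_zval_sq (d : ℕ) (w : Fin d → ℝ) :
    ∑ v : Fin d → Bool, zval w v ^ 2 = 2^d * ∑ i, w i ^ 2 := by
  have expand : ∀ v : Fin d → Bool, zval w v ^ 2
      = ∑ i, ∑ i', (w i * w i') * (sg (v i) * sg (v i')) := by
    intro v
    rw [zval, sq, Finset.sum_mul_sum]
    exact Finset.sum_congr rfl fun i _ => Finset.sum_congr rfl fun i' _ => by ring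
  simp_rw [expand]
  rw [Finset.sum_comm]
  have : ∀ i : Fin d, ∑ v : Fin d → Bool, ∑ i', (w i * w i') * (sg (v i) * sg (v i'))
      = 2^d * w i ^ 2 := by
    intro i
    rw [Finset.sum_comm]
    have inner : ∀ i' : Fin d, ∑ v : Fin d → Bool, (w i * w i') * (sg (v i) * sg (v i'))
        = (w i * w i') * (if i = i' then (2:ℝ)^d else 0) := by
      intro i'
      rw [← Finset.mul_sum, sum_sg_mul]
    simp_rw [inner]
    rw [Finset.sum_eq_single i]
    · simp [sq]; ring
    · intro j _ hj; rw [if_neg (Ne.symm hj)]; ring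
    · intro hi; exact absurd (Finset.mem_univ i) hi
  simp_rw [this]
  rw [← Finset.mul_sum]


lemma exp_eq_tsum_real (x : ℝ) : Real.exp x = ∑' p : ℕ, x ^ p / Nat.factorial p := by
  rw [Real.exp_eq_exp_ℝ, NormedSpace.exp_eq_tsum ℝ]
  exact tsum_congr fun p => by rw [smul_eq_mul]; ring

lemma mgf_bound (d : ℕ) (w : Fin d → ℝ) (hw : ∑ i, w i ^ 2 = 1) (η : ℝ) (hη : |η| ≤ 1/8) :
    ∑ v : Fin d → Bool, Real.exp (η * (zval w v ^ 2 - 1))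
      ≤ 2^d * Real.exp (64 * η^2) := by
  classical
  set x : (Fin d → Bool) → ℝ := fun v => η * (zval w v ^ 2 - 1) with hx
  set a : ℕ → ℝ := fun p => ∑ v : Fin d → Bool, x v ^ p / Nat.factorial p with ha
  have hsum_each : ∀ v : Fin d → Bool, Summable (fun p : ℕ => x v ^ p / Nat.factorial p) :=
    fun v => Real.summable_pow_div_factorial (x v)
  have hsum_a : Summable a := summable_sum (fun v _ => hsum_each v)
  have step1 : ∑ v : Fin d → Bool, Real.exp (x v) = ∑' p : ℕ, a p := by
    simp_rw [exp_eq_tsum_real]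
    exact (Summable.tsum_finsetSum (fun v _ => hsum_each v)).symm
  have hcard : (Fintype.card (Fin d → Bool) : ℝ) = 2^d := by
    simp [Fintype.card_fun]
  have ha0 : a 0 = 2^d := by
    simp only [ha, pow_zero, Nat.factorial_zero, Nat.cast_one, div_one]
    rw [Finset.sum_const]
    simp [Fintype.card_fun]
  have ha1 : a 1 = 0 := by
    simp only [ha, pow_one, Nat.factorial_one, Nat.cast_one, div_one, hx]
    rw [← Finset.mul_sum, Finset.sum_sub_distrib, sum_zval_sq, hw, Finset.sum_const]
    simp [Fintype.card_fun]
  set r : ℝ := 4 * |η| with hr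
  have hrnn : 0 ≤ r := by positivity
  have hrlt : r ≤ 1/2 := by rw [hr]; linarith [hη]
  have hrlt1 : r < 1 := lt_of_le_of_lt hrlt (by norm_num)
  have htail : ∀ p : ℕ, |a p| ≤ 2^d * 2 * r^p := by
    intro p
    have hfacpos : (0:ℝ) < Nat.factorial p := by positivity
    have hfac1 : (1:ℝ) ≤ Nat.factorial p := by
      exact_mod_cast Nat.one_le_iff_ne_zero.mpr (Nat.factorial_ne_zero p)
    have hxb : ∀ v : Fin d → Bool, |x v| ^ p ≤ |η|^p * (2^p * ((zval w v)^(2*p) + 1)) := by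
      intro v
      have h1 : |x v| = |η| * |zval w v ^2 - 1| := abs_mul _ _
      have h2 : |zval w v ^ 2 - 1| ≤ zval w v ^2 + 1 :=
        calc |zval w v ^ 2 - 1| ≤ |zval w v ^2| + |(1:ℝ)| := abs_sub _ _
          _ = zval w v ^2 + 1 := by rw [abs_one, abs_of_nonneg (sq_nonneg _)]
      have h3 : (zval w v ^2 + 1)^p ≤ 2^p * ((zval w v)^(2*p) + 1) := by
        have h4 := add_pow_le (sq_nonneg (zval w v)) zero_le_one p
        have h5 : (2:ℝ)^(p-1) ≤ 2^p := pow_le_pow_right₀ (by norm_num) (Nat.sub_le _ _)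
        calc (zval w v ^2 + 1)^p ≤ 2^(p-1) * ((zval w v ^2)^p + 1^p) := h4
          _ ≤ 2^p * ((zval w v ^2)^p + 1^p) := by
              apply mul_le_mul_of_nonneg_right h5; positivity
          _ = 2^p * ((zval w v)^(2*p) + 1) := by rw [← pow_mul, one_pow]
      calc |x v|^p = |η|^p * |zval w v ^2 - 1|^p := by rw [h1, mul_pow]
        _ ≤ |η|^p * (zval w v ^2 + 1)^p :=
            mul_le_mul_of_nonneg_left (pow_le_pow_left₀ (abs_nonneg _) h2 p) (by positivity)
        _ ≤ |η|^p * (2^p * ((zval w v)^(2*p) + 1)) :=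
            mul_le_mul_of_nonneg_left h3 (by positivity)
    have hm : ∑ v : Fin d → Bool, (zval w v)^(2*p) ≤ 2^d * (2^p * Nat.factorial p) := by
      have := moment_bound d w p
      rw [hw, one_pow, mul_one] at this
      exact this
    have hmnn : (0:ℝ) ≤ ∑ v : Fin d → Bool, (zval w v)^(2*p) :=
      Finset.sum_nonneg fun v _ => by rw [pow_mul]; positivity
    calc |a p| ≤ ∑ v : Fin d → Bool, |x v ^ p / Nat.factorial p| := Finset.abs_sum_le_sum_abs _ _
      _ = ∑ v : Fin d → Bool, |x v|^p / Nat.factorial p :=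
          Finset.sum_congr rfl fun v _ => by rw [abs_div, abs_pow, Nat.abs_cast]
      _ ≤ ∑ v : Fin d → Bool, (|η|^p * (2^p * ((zval w v)^(2*p) + 1))) / Nat.factorial p :=
          Finset.sum_le_sum fun v _ => (div_le_div_iff_of_pos_right hfacpos).mpr (hxb v)
      _ = (|η|^p * 2^p) * ((∑ v : Fin d → Bool, (zval w v)^(2*p)) + 2^d) / Nat.factorial p := by
          rw [← Finset.sum_div]
          congr 1
          calc ∑ v : Fin d → Bool, |η|^p * (2^p * ((zval w v)^(2*p) + 1))
              = ∑ v : Fin d → Bool, (|η|^p * 2^p) * ((zval w v)^(2*p) + 1) :=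
                Finset.sum_congr rfl fun v _ => by ring
            _ = (|η|^p * 2^p) * ∑ v : Fin d → Bool, ((zval w v)^(2*p) + 1) := by
                rw [Finset.mul_sum]
            _ = (|η|^p * 2^p) * ((∑ v : Fin d → Bool, (zval w v)^(2*p)) + 2^d) := by
                rw [Finset.sum_add_distrib, Finset.sum_const]
                simp [Fintype.card_fun]
      _ ≤ (|η|^p * 2^p) * ((2^d * (2^p * Nat.factorial p)) + 2^d) / Nat.factorial p := by
          apply (div_le_div_iff_of_pos_right hfacpos).mpr
          apply mul_le_mul_of_nonneg_left (add_le_add_left hm _) (by positivity)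
      _ = 2^d * ((4*|η|)^p + (2*|η|)^p / Nat.factorial p) := by
          field_simp
          rw [mul_pow, mul_pow, show ((4:ℝ))^p = 2^p*2^p by rw [← mul_pow]; norm_num]
          ring
      _ ≤ 2^d * (2 * r^p) := by
          have e1 : (2*|η|)^p / Nat.factorial p ≤ (2*|η|)^p := by
            apply div_le_self (by positivity) hfac1
          have e2 : (2*|η|)^p ≤ r^p := by
            apply pow_le_pow_left₀ (by positivity)
            rw [hr]; linarith [abs_nonneg η]
          have : (4*|η|)^p = r^p := by rw [hr]
          rw [this]
          have : (0:ℝ) ≤ (2:ℝ)^d := by positivity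
          nlinarith [e1.trans e2]
      _ = 2^d * 2 * r^p := by ring
  -- assemble
  have hsum_a1 : Summable (fun p : ℕ => a (p+1)) := (summable_nat_add_iff 1).mpr hsum_a
  have hsum_a2 : Summable (fun p : ℕ => a (p+2)) := by
    have := (summable_nat_add_iff 2).mpr hsum_a
    exact this
  have hgeo : Summable (fun p : ℕ => (2:ℝ)^d * 2 * r^(p+2)) := by
    apply Summable.mul_left
    exact ((summable_geometric_of_lt_one hrnn hrlt1).mul_left (r^2)).congr
      (fun p => by rw [pow_add]; ring)
  have htsum2 : ∑' p : ℕ, a (p+2) ≤ 2^d * (64 * η^2) := by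
    have h1 : ∑' p : ℕ, a (p+2) ≤ ∑' p : ℕ, (2:ℝ)^d * 2 * r^(p+2) := by
      apply Summable.tsum_le_tsum _ hsum_a2 hgeo
      intro p
      exact (le_abs_self _).trans (htail (p+2))
    have h2 : ∑' p : ℕ, (2:ℝ)^d * 2 * r^(p+2) = 2^d * 2 * r^2 * (1-r)⁻¹ := by
      calc ∑' p : ℕ, (2:ℝ)^d * 2 * r^(p+2)
          = ∑' p : ℕ, (2^d * 2 * r^2) * r^p := tsum_congr fun p => by rw [pow_add]; ring
        _ = (2^d * 2 * r^2) * ∑' p : ℕ, r^p := tsum_mul_left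
        _ = 2^d * 2 * r^2 * (1-r)⁻¹ := by rw [tsum_geometric_of_lt_one hrnn hrlt1]
    have h3 : (1-r)⁻¹ ≤ 2 := by
      rw [inv_le_comm₀ (by linarith) (by norm_num)]
      linarith
    have h4 : 2^d * 2 * r^2 * (1-r)⁻¹ ≤ 2^d * 2 * r^2 * 2 := by
      apply mul_le_mul_of_nonneg_left h3 (by positivity)
    have h5 : (2:ℝ)^d * 2 * r^2 * 2 = 2^d * (64 * η^2) := by
      rw [hr]
      rw [mul_pow]
      rw [sq_abs]
      ring
    linarith [h1.trans (h2.le.trans (h4.trans_eq h5))]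
  have hfinal : ∑' p : ℕ, a p ≤ 2^d * (1 + 64 * η^2) := by
    rw [Summable.tsum_eq_zero_add hsum_a, Summable.tsum_eq_zero_add hsum_a1]
    simp only [ha0, ha1]
    have : ∀ p:ℕ, a (p+1+1) = a (p+2) := fun p => rfl
    simp_rw [this]
    linarith [htsum2]
  rw [show (∑ v : Fin d → Bool, Real.exp (η * (zval w v ^ 2 - 1))) = ∑' p : ℕ, a p from step1]
  calc ∑' p : ℕ, a p ≤ 2^d * (1 + 64 * η^2) := hfinal
    _ ≤ 2^d * Real.exp (64 * η^2) := by
        apply mul_le_mul_of_nonneg_left _ (by positivity)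
        linarith [Real.add_one_le_exp (64 * η^2)]


lemma col_prod {d t : ℕ} (G : (Fin d → Bool) → ℝ) :
    ∑ ω : Fin d → Fin t → Bool, ∏ j : Fin t, G (fun i => ω i j)
      = (∑ v : Fin d → Bool, G v)^t := by
  classical
  have h1 : ∑ ω : Fin d → Fin t → Bool, ∏ j : Fin t, G (fun i => ω i j)
      = ∑ h : Fin t → Fin d → Bool, ∏ j : Fin t, G (h j) := by
    apply Fintype.sum_equiv (Equiv.piComm (fun (_ : Fin t) (_ : Fin d) => Bool)).symm
    intro ω
    rfl
  rw [h1, sum_pi_prod (fun (_ : Fin t) v => G v), Finset.prod_const]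
  simp

noncomputable def Tval {d t : ℕ} (w : Fin d → ℝ) (ω : Fin d → Fin t → Bool) : ℝ :=
  ∑ j : Fin t, (zval w (fun i => ω i j))^2

lemma chernoff (d t : ℕ) (w : Fin d → ℝ) (hw : ∑ i, w i ^ 2 = 1)
    (δ : ℝ) (hδ : 0 < δ) (hδ1 : δ ≤ 1) (ς : ℝ) (hς : ς = 1 ∨ ς = -1) :
    ((Finset.univ.filter
        (fun ω : Fin d → Fin t → Bool => (t:ℝ)*δ ≤ ς*(Tval w ω - t))).card : ℝ)
      ≤ 2^(d*t) * Real.exp (-((t:ℝ)*δ^2)/256) := by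
  classical
  set lam : ℝ := δ/128 with hlam
  have hlampos : 0 < lam := by positivity
  set η : ℝ := ς * lam with heta
  have habs : |η| ≤ 1/8 := by
    have : |ς| = 1 := by rcases hς with h|h <;> simp [h]
    rw [heta, abs_mul, this, one_mul, abs_of_pos hlampos]
    rw [hlam]; linarith
  have hsq : η^2 = lam^2 := by
    rcases hς with h|h <;> rw [heta, h] <;> ring
  set S := Finset.univ.filter
      (fun ω : Fin d → Fin t → Bool => (t:ℝ)*δ ≤ ς*(Tval w ω - t)) with hS
  -- step 1: Markov bound on count
  have step1 : (S.card : ℝ) ≤ ∑ ω : Fin d → Fin t → Bool,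
      Real.exp (lam * (ς*(Tval w ω - t) - t*δ)) := by
    have h1 : (S.card : ℝ) = ∑ ω ∈ S, (1:ℝ) := by simp
    rw [h1]
    have h2 : ∀ ω ∈ S, (1:ℝ) ≤ Real.exp (lam * (ς*(Tval w ω - t) - t*δ)) := by
      intro ω hω
      rw [hS, Finset.mem_filter] at hω
      have : 0 ≤ lam * (ς*(Tval w ω - t) - t*δ) := by
        apply mul_nonneg hlampos.le
        linarith [hω.2]
      calc (1:ℝ) = Real.exp 0 := Real.exp_zero.symm
        _ ≤ _ := Real.exp_le_exp.mpr this
    calc ∑ ω ∈ S, (1:ℝ) ≤ ∑ ω ∈ S, Real.exp (lam * (ς*(Tval w ω - t) - t*δ)) :=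
          Finset.sum_le_sum h2
      _ ≤ ∑ ω : Fin d → Fin t → Bool, Real.exp (lam * (ς*(Tval w ω - t) - t*δ)) :=
          Finset.sum_le_sum_of_subset_of_nonneg (Finset.subset_univ S)
            (fun ω _ _ => (Real.exp_pos _).le)
  -- step 2: factorize
  have step2 : ∀ ω : Fin d → Fin t → Bool,
      Real.exp (lam * (ς*(Tval w ω - t) - t*δ))
        = Real.exp (-(lam * (t*δ))) * ∏ j : Fin t, Real.exp (η * ((zval w (fun i => ω i j))^2 - 1)) := by
    intro ω
    rw [← Real.exp_sum, ← Real.exp_add]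
    congr 1
    have hT : Tval w ω - t = ∑ j : Fin t, ((zval w (fun i => ω i j))^2 - 1) := by
      rw [Finset.sum_sub_distrib, Tval, Finset.sum_const]
      simp
    have : ∑ j : Fin t, η * ((zval w (fun i => ω i j))^2 - 1)
        = η * (Tval w ω - t) := by
      rw [hT, Finset.mul_sum]
    rw [this, heta]
    ring
  -- step 3
  have mgf := mgf_bound d w hw η habs
  have hnn : (0:ℝ) ≤ ∑ v : Fin d → Bool, Real.exp (η * (zval w v ^ 2 - 1)) :=
    Finset.sum_nonneg fun v _ => (Real.exp_pos _).le
  have step3 : ∑ ω : Fin d → Fin t → Bool,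
      Real.exp (lam * (ς*(Tval w ω - t) - t*δ))
      ≤ Real.exp (-(lam * (t*δ))) * (2^d * Real.exp (64 * η^2))^t := by
    calc ∑ ω : Fin d → Fin t → Bool, Real.exp (lam * (ς*(Tval w ω - t) - t*δ))
        = Real.exp (-(lam * (t*δ))) *
            ∑ ω : Fin d → Fin t → Bool, ∏ j : Fin t, Real.exp (η * ((zval w (fun i => ω i j))^2 - 1)) := by
          rw [Finset.mul_sum]
          exact Finset.sum_congr rfl fun ω _ => step2 ω
      _ = Real.exp (-(lam * (t*δ))) *
            (∑ v : Fin d → Bool, Real.exp (η * (zval w v ^ 2 - 1)))^t := by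
          rw [col_prod (fun v => Real.exp (η * (zval w v ^ 2 - 1)))]
      _ ≤ Real.exp (-(lam * (t*δ))) * (2^d * Real.exp (64 * η^2))^t := by
          apply mul_le_mul_of_nonneg_left _ (Real.exp_pos _).le
          exact pow_le_pow_left₀ hnn mgf t
  -- step 4: arithmetic
  have step4 : Real.exp (-(lam * (t*δ))) * (2^d * Real.exp (64 * η^2))^t
      = 2^(d*t) * Real.exp (-((t:ℝ)*δ^2)/256) := by
    rw [mul_pow, ← Real.exp_nat_mul]
    rw [show Real.exp (-(lam*((t:ℝ)*δ))) * (((2:ℝ)^d)^t * Real.exp ((t:ℝ)*(64*η^2)))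
        = ((2:ℝ)^d)^t * (Real.exp (-(lam*((t:ℝ)*δ))) * Real.exp ((t:ℝ)*(64*η^2))) from by ring]
    rw [← Real.exp_add, ← pow_mul, hsq]
    congr 1
    rw [hlam]
    ring
  calc (S.card : ℝ) ≤ _ := step1
    _ ≤ _ := step3
    _ = _ := step4


/-- Any (1/4)-separated finite subset of the unit sphere has at most `9^k` points. -/
lemma separated_card_le (k : ℕ) (hk : 1 ≤ k)
    (F : Finset (EuclideanSpace ℝ (Fin k)))
    (hF : ∀ p ∈ F, ‖p‖ = 1)
    (hsep : (F : Set (EuclideanSpace ℝ (Fin k))).Pairwise (fun p q => 1/4 < dist p q)) :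
    F.card ≤ 9^k := by
  classical
  have : Nonempty (Fin k) := ⟨⟨0, hk⟩⟩
  set μ : Measure (EuclideanSpace ℝ (Fin k)) := volume with hμ
  have hfinrank : Module.finrank ℝ (EuclideanSpace ℝ (Fin k)) = k := by simp
  have hball : ∀ (x : EuclideanSpace ℝ (Fin k)) (r : ℝ), 0 ≤ r →
      μ (ball x r) = ENNReal.ofReal (r ^ k) * μ (ball 0 1) := by
    intro x r hr
    rw [Measure.addHaar_ball μ x hr, hfinrank]
  have hdisj : (F : Set (EuclideanSpace ℝ (Fin k))).PairwiseDisjoint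
      (fun p => ball p (1/8)) := by
    intro p hp q hq hpq
    apply Metric.ball_disjoint_ball
    have := hsep hp hq hpq
    linarith
  have hsub : ∀ p ∈ F, ball p (1/8) ⊆ ball (0 : EuclideanSpace ℝ (Fin k)) (9/8) := by
    intro p hp x hx
    rw [mem_ball] at hx ⊢
    have h1 : dist x (0 : EuclideanSpace ℝ (Fin k)) ≤ dist x p + dist p 0 := dist_triangle _ _ _
    have h2 : dist p (0 : EuclideanSpace ℝ (Fin k)) = 1 := by rw [dist_zero_right, hF p hp]
    linarith
  have hunion : μ (⋃ p ∈ F, ball p (1/8)) = ∑ p ∈ F, μ (ball p (1/8)) :=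
    measure_biUnion_finset hdisj (fun p _ => measurableSet_ball)
  have hle : ∑ p ∈ F, μ (ball p (1/8)) ≤ μ (ball (0 : EuclideanSpace ℝ (Fin k)) (9/8)) := by
    rw [← hunion]
    exact measure_mono (Set.iUnion₂_subset hsub)
  rw [Finset.sum_congr rfl (fun p _ => hball p (1/8) (by norm_num)),
    Finset.sum_const, hball 0 (9/8) (by norm_num)] at hle
  set m1 : ℝ≥0∞ := μ (ball 0 1) with hm1
  have hm1pos : m1 ≠ 0 := (measure_ball_pos μ _ (by norm_num : (0:ℝ) < 1)).ne'
  have hm1top : m1 ≠ ⊤ := measure_ball_lt_top.ne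
  have hcard : (F.card : ℝ≥0∞) * ENNReal.ofReal ((1/8:ℝ)^k) ≤ ENNReal.ofReal ((9/8:ℝ)^k) := by
    rw [nsmul_eq_mul, ← mul_assoc] at hle
    exact (ENNReal.mul_le_mul_iff_left hm1pos hm1top).mp hle
  have h18 : (0:ℝ) < (1/8)^k := by positivity
  have hreal : (F.card : ℝ) * (1/8)^k ≤ (9/8)^k := by
    have h2 := ENNReal.toReal_mono (by simp) hcard
    rw [ENNReal.toReal_mul, ENNReal.toReal_ofReal h18.le,
      ENNReal.toReal_ofReal (by positivity : (0:ℝ) ≤ (9/8)^k)] at h2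
    simpa using h2
  have hfin : (F.card : ℝ) ≤ 9^k := by
    have h9 : ((9:ℝ)/8)^k / (1/8)^k = 9^k := by
      rw [← div_pow]
      norm_num
    rw [← h9, le_div_iff₀ h18]
    exact hreal
  exact_mod_cast hfin


/-- Existence of a (1/4)-net of the unit sphere of size at most `9^k`. -/
lemma net_exists (k : ℕ) (hk : 1 ≤ k) :
    ∃ F : Finset (EuclideanSpace ℝ (Fin k)),
      (∀ p ∈ F, ‖p‖ = 1) ∧ F.card ≤ 9^k ∧
      ∀ y : EuclideanSpace ℝ (Fin k), ‖y‖ = 1 → ∃ p ∈ F, ‖y - p‖ ≤ 1/4 := by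
  classical
  set P : ℕ → Prop := fun n => ∃ F : Finset (EuclideanSpace ℝ (Fin k)),
      (∀ p ∈ F, ‖p‖ = 1) ∧
      (F : Set (EuclideanSpace ℝ (Fin k))).Pairwise (fun p q => 1/4 < dist p q) ∧
      F.card = n with hP
  have hP0 : P 0 := ⟨∅, by simp, by simp, by simp⟩
  have hPbound : ∀ n, P n → n ≤ 9^k := by
    rintro n ⟨F, h1, h2, h3⟩
    rw [← h3]
    exact separated_card_le k hk F h1 h2
  set n0 := Nat.findGreatest P (9^k) with hn0
  have hPn0 : P n0 := Nat.findGreatest_spec (m := 0) (Nat.zero_le _) hP0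
  obtain ⟨F, hFnorm, hFsep, hFcard⟩ := hPn0
  refine ⟨F, hFnorm, ?_, ?_⟩
  · rw [hFcard]; exact Nat.findGreatest_le _
  · intro y hy
    by_contra hcon
    push_neg at hcon
    have hynotin : y ∉ F := by
      intro hin
      have h0 := hcon y hin
      simp at h0
      linarith
    have hsep' : ((insert y F : Finset (EuclideanSpace ℝ (Fin k))) :
        Set (EuclideanSpace ℝ (Fin k))).Pairwise (fun p q => 1/4 < dist p q) := by
      rw [Finset.coe_insert]
      apply Set.Pairwise.insert hFsep
      intro p hp hyp
      have h1 : 1/4 < dist y p := by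
        rw [dist_eq_norm]
        exact hcon p hp
      exact ⟨h1, by rwa [dist_comm] at h1⟩
    have hnew : P (n0 + 1) := by
      refine ⟨insert y F, ?_, hsep', ?_⟩
      · intro p hp
        rcases Finset.mem_insert.mp hp with h | h
        · rw [h]; exact hy
        · exact hFnorm p h
      · rw [Finset.card_insert_of_notMem hynotin, hFcard]
    have hle : n0 + 1 ≤ 9^k := hPbound _ hnew
    have : ¬ P (n0 + 1) := Nat.findGreatest_is_greatest (by omega) hle
    exact this hnew



def qf {k : ℕ} (A : Matrix (Fin k) (Fin k) ℝ) (y : EuclideanSpace ℝ (Fin k)) : ℝ :=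
  ∑ i, ∑ j, y i * A i j * y j

def bf {k : ℕ} (A : Matrix (Fin k) (Fin k) ℝ) (x y : EuclideanSpace ℝ (Fin k)) : ℝ :=
  ∑ i, ∑ j, x i * A i j * y j

lemma qf_eq_bf {k : ℕ} (A : Matrix (Fin k) (Fin k) ℝ) (y : EuclideanSpace ℝ (Fin k)) :
    qf A y = bf A y y := rfl

lemma bf_symm {k : ℕ} (A : Matrix (Fin k) (Fin k) ℝ) (hA : Aᵀ = A)
    (x y : EuclideanSpace ℝ (Fin k)) : bf A x y = bf A y x := by
  unfold bf
  rw [Finset.sum_comm]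
  refine Finset.sum_congr rfl fun j _ => Finset.sum_congr rfl fun i _ => ?_
  have : A i j = A j i := by
    conv_lhs => rw [← hA]
    rfl
  rw [this]; ring

lemma bf_add_left {k : ℕ} (A : Matrix (Fin k) (Fin k) ℝ) (x x' y : EuclideanSpace ℝ (Fin k)) :
    bf A (x + x') y = bf A x y + bf A x' y := by
  unfold bf
  rw [← Finset.sum_add_distrib]
  refine Finset.sum_congr rfl fun i _ => ?_
  rw [← Finset.sum_add_distrib]
  refine Finset.sum_congr rfl fun j _ => ?_
  have : (x + x') i = x i + x' i := rfl
  rw [this]; ring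

lemma bf_sub_left {k : ℕ} (A : Matrix (Fin k) (Fin k) ℝ) (x x' y : EuclideanSpace ℝ (Fin k)) :
    bf A (x - x') y = bf A x y - bf A x' y := by
  unfold bf
  rw [← Finset.sum_sub_distrib]
  refine Finset.sum_congr rfl fun i _ => ?_
  rw [← Finset.sum_sub_distrib]
  refine Finset.sum_congr rfl fun j _ => ?_
  have : (x - x') i = x i - x' i := rfl
  rw [this]; ring

lemma bf_smul_left {k : ℕ} (A : Matrix (Fin k) (Fin k) ℝ) (a : ℝ) (x y : EuclideanSpace ℝ (Fin k)) :
    bf A (a • x) y = a * bf A x y := by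
  unfold bf
  rw [Finset.mul_sum]
  refine Finset.sum_congr rfl fun i _ => ?_
  rw [Finset.mul_sum]
  refine Finset.sum_congr rfl fun j _ => ?_
  have : (a • x) i = a * x i := rfl
  rw [this]; ring

lemma bf_add_right {k : ℕ} (A : Matrix (Fin k) (Fin k) ℝ) (hA : Aᵀ = A) (x y y' : EuclideanSpace ℝ (Fin k)) :
    bf A x (y + y') = bf A x y + bf A x y' := by
  rw [bf_symm A hA, bf_add_left, bf_symm A hA y x, bf_symm A hA y' x]

lemma bf_sub_right {k : ℕ} (A : Matrix (Fin k) (Fin k) ℝ) (hA : Aᵀ = A) (x y y' : EuclideanSpace ℝ (Fin k)) :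
    bf A x (y - y') = bf A x y - bf A x y' := by
  rw [bf_symm A hA, bf_sub_left, bf_symm A hA y x, bf_symm A hA y' x]

lemma bf_smul_right {k : ℕ} (A : Matrix (Fin k) (Fin k) ℝ) (hA : Aᵀ = A) (a : ℝ) (x y : EuclideanSpace ℝ (Fin k)) :
    bf A x (a • y) = a * bf A x y := by
  rw [bf_symm A hA, bf_smul_left, bf_symm A hA y x]

lemma qf_smul {k : ℕ} (A : Matrix (Fin k) (Fin k) ℝ) (hA : Aᵀ = A) (a : ℝ) (y : EuclideanSpace ℝ (Fin k)) :
    qf A (a • y) = a^2 * qf A y := by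
  rw [qf_eq_bf, bf_smul_left, bf_smul_right A hA, qf_eq_bf]
  ring

/-- Main net bound for quadratic forms. -/
lemma quad_net_bound {k : ℕ} (hk : 1 ≤ k) (A : Matrix (Fin k) (Fin k) ℝ) (hA : Aᵀ = A)
    (F : Finset (EuclideanSpace ℝ (Fin k)))
    (hFnorm : ∀ p ∈ F, ‖p‖ = 1)
    (hFnet : ∀ y : EuclideanSpace ℝ (Fin k), ‖y‖ = 1 → ∃ p ∈ F, ‖y - p‖ ≤ 1/4)
    (m : ℝ) (hm : 0 ≤ m) (hFq : ∀ p ∈ F, |qf A p| ≤ m) :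
    ∀ y : EuclideanSpace ℝ (Fin k), ‖y‖ = 1 → |qf A y| ≤ 2*m := by
  classical
  set S : Set ℝ := {r | ∃ y : EuclideanSpace ℝ (Fin k), ‖y‖ = 1 ∧ r = |qf A y|} with hSdef
  have hbdd : BddAbove S := by
    refine ⟨∑ i, ∑ j, |A i j|, ?_⟩
    rintro r ⟨y, hy, rfl⟩
    have hyc : ∀ i, |y i| ≤ 1 := by
      intro i
      have h1 : |y i| ^ 2 ≤ ∑ j, ‖y j‖ ^ 2 := by
        refine Finset.single_le_sum (f := fun j => ‖y j‖^2) (fun j _ => by positivity) (Finset.mem_univ i) |>.trans_eq' ?_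
        simp [sq_abs]
      have h2 : ‖y‖^2 = ∑ j, ‖y j‖^2 := by
        rw [EuclideanSpace.norm_eq]
        rw [Real.sq_sqrt]
        positivity
      nlinarith [abs_nonneg (y i)]
    calc |qf A y| ≤ ∑ i, |∑ j, y i * A i j * y j| := Finset.abs_sum_le_sum_abs _ _
      _ ≤ ∑ i, ∑ j, |y i * A i j * y j| :=
          Finset.sum_le_sum fun i _ => Finset.abs_sum_le_sum_abs _ _
      _ ≤ ∑ i, ∑ j, |A i j| := by
          refine Finset.sum_le_sum fun i _ => Finset.sum_le_sum fun j _ => ?_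
          rw [abs_mul, abs_mul]
          calc |y i| * |A i j| * |y j| ≤ 1 * |A i j| * 1 := by
                apply mul_le_mul (mul_le_mul (hyc i) le_rfl (abs_nonneg _) (by linarith [hyc i, abs_nonneg (y i)])) (hyc j) (abs_nonneg _)
                positivity
            _ = |A i j| := by ring
  have hne : S.Nonempty := by
    refine ⟨|qf A (EuclideanSpace.single (⟨0, hk⟩ : Fin k) (1:ℝ))|,
      EuclideanSpace.single _ 1, ?_, rfl⟩
    rw [EuclideanSpace.norm_single]
    simp
  set s : ℝ := sSup S with hs
  have hub : ∀ y : EuclideanSpace ℝ (Fin k), ‖y‖ = 1 → |qf A y| ≤ s :=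
    fun y hy => le_csSup hbdd ⟨y, hy, rfl⟩
  have hsnn : 0 ≤ s := by
    obtain ⟨r, y, hy, rfl⟩ := hne
    exact (abs_nonneg _).trans (hub y hy)
  -- |qf x| ≤ s ‖x‖² for all x
  have hqf_all : ∀ x : EuclideanSpace ℝ (Fin k), |qf A x| ≤ s * ‖x‖^2 := by
    intro x
    by_cases hx : x = 0
    · subst hx
      have : qf A (0 : EuclideanSpace ℝ (Fin k)) = 0 := by
        unfold qf
        refine Finset.sum_eq_zero fun i _ => Finset.sum_eq_zero fun j _ => ?_
        have : (0 : EuclideanSpace ℝ (Fin k)) i = 0 := rfl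
        rw [this]; ring
      rw [this]
      simp
    · have hxn : 0 < ‖x‖ := norm_pos_iff.mpr hx
      set u : EuclideanSpace ℝ (Fin k) := ‖x‖⁻¹ • x with hu
      have hun : ‖u‖ = 1 := by
        rw [hu, norm_smul, norm_inv, norm_norm, inv_mul_cancel₀ hxn.ne']
      have hxu : x = ‖x‖ • u := by
        rw [hu, smul_smul, mul_inv_cancel₀ hxn.ne', one_smul]
      have hqx : qf A x = ‖x‖^2 * qf A u := by
        conv_lhs => rw [hxu]
        rw [qf_smul A hA]
      rw [hqx, abs_mul, abs_of_nonneg (sq_nonneg ‖x‖)]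
      calc ‖x‖^2 * |qf A u| ≤ ‖x‖^2 * s := by
            apply mul_le_mul_of_nonneg_left (hub u hun) (sq_nonneg _)
        _ = s * ‖x‖^2 := by ring
  -- |bf u z| ≤ s ‖u‖ ‖z‖
  have hbf : ∀ u z : EuclideanSpace ℝ (Fin k), |bf A u z| ≤ s * ‖u‖ * ‖z‖ := by
    intro u z
    have hpolar : ∀ u z : EuclideanSpace ℝ (Fin k), |bf A u z| ≤ s * (‖u‖^2 + ‖z‖^2) / 2 := by
      intro u z
      have hexp : bf A u z = (qf A (u + z) - qf A (u - z)) / 4 := by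
        rw [qf_eq_bf, qf_eq_bf, bf_add_left, bf_sub_left,
          bf_add_right A hA, bf_add_right A hA, bf_sub_right A hA, bf_sub_right A hA,
          bf_symm A hA z u]
        ring
      rw [hexp]
      have h1 := hqf_all (u + z)
      have h2 := hqf_all (u - z)
      have hpar : ‖u + z‖^2 + ‖u - z‖^2 = 2 * (‖u‖^2 + ‖z‖^2) := by
        have := parallelogram_law_with_norm ℝ u z
        nlinarith [this]
      rw [abs_div]
      rw [abs_of_nonneg (by norm_num : (0:ℝ) ≤ (4:ℝ))]
      have h3 : |qf A (u + z) - qf A (u - z)| ≤ s * ‖u+z‖^2 + s * ‖u-z‖^2 := by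
        calc |qf A (u + z) - qf A (u - z)| ≤ |qf A (u+z)| + |qf A (u-z)| := abs_sub _ _
          _ ≤ s * ‖u+z‖^2 + s * ‖u-z‖^2 := add_le_add h1 h2
      have h4 : s * ‖u+z‖^2 + s * ‖u-z‖^2 = s * 2 * (‖u‖^2 + ‖z‖^2) := by
        rw [← mul_add, hpar]; ring
      linarith [h3.trans_eq h4]
    by_cases hu0 : u = 0
    · subst hu0
      have : bf A (0 : EuclideanSpace ℝ (Fin k)) z = 0 := by
        unfold bf
        refine Finset.sum_eq_zero fun i _ => Finset.sum_eq_zero fun j _ => ?_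
        have : (0 : EuclideanSpace ℝ (Fin k)) i = 0 := rfl
        rw [this]; ring
      rw [this]; simp
    by_cases hz0 : z = 0
    · subst hz0
      have : bf A u (0 : EuclideanSpace ℝ (Fin k)) = 0 := by
        rw [bf_symm A hA]
        unfold bf
        refine Finset.sum_eq_zero fun i _ => Finset.sum_eq_zero fun j _ => ?_
        have : (0 : EuclideanSpace ℝ (Fin k)) i = 0 := rfl
        rw [this]; ring
      rw [this]; simp
    have hun : 0 < ‖u‖ := norm_pos_iff.mpr hu0
    have hzn : 0 < ‖z‖ := norm_pos_iff.mpr hz0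
    set α : ℝ := Real.sqrt (‖z‖ / ‖u‖) with hα
    have hαpos : 0 < α := Real.sqrt_pos.mpr (by positivity)
    have hα2 : α^2 = ‖z‖ / ‖u‖ := Real.sq_sqrt (by positivity)
    have hscale : bf A u z = bf A (α • u) (α⁻¹ • z) := by
      rw [bf_smul_left, bf_smul_right A hA, ← mul_assoc, mul_inv_cancel₀ hαpos.ne', one_mul]
    rw [hscale]
    have := hpolar (α • u) (α⁻¹ • z)
    have hnu : ‖α • u‖^2 = α^2 * ‖u‖^2 := by
      rw [norm_smul, mul_pow, Real.norm_eq_abs, sq_abs]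
    have hnz : ‖α⁻¹ • z‖^2 = α⁻¹^2 * ‖z‖^2 := by
      rw [norm_smul, mul_pow, Real.norm_eq_abs, sq_abs]
    have harith : s * (‖α • u‖^2 + ‖α⁻¹ • z‖^2) / 2 = s * ‖u‖ * ‖z‖ := by
      rw [hnu, hnz, hα2]
      have hinv : (α⁻¹)^2 = ‖u‖ / ‖z‖ := by
        rw [inv_pow, hα2]
        rw [inv_div]
      rw [hinv]
      field_simp
      ring
    linarith [this.trans_eq harith]
  -- main step
  have hstep : ∀ y : EuclideanSpace ℝ (Fin k), ‖y‖ = 1 → |qf A y| ≤ m + s/2 := by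
    intro y hy
    obtain ⟨p, hpF, hyp⟩ := hFnet y hy
    have hqp : |qf A p| ≤ m := hFq p hpF
    have hdiff : qf A y - qf A p = bf A (y - p) (y + p) := by
      rw [qf_eq_bf, qf_eq_bf, bf_sub_left, bf_add_right A hA, bf_add_right A hA,
        bf_symm A hA p y]
      ring
    have hnorm_sum : ‖y + p‖ ≤ 2 := by
      have hp1 : ‖p‖ = 1 := hFnorm p hpF
      calc ‖y + p‖ ≤ ‖y‖ + ‖p‖ := norm_add_le _ _
        _ = 2 := by rw [hy, hp1]; norm_num
    have hb := hbf (y - p) (y + p)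
    have : |qf A y - qf A p| ≤ s * (1/4) * 2 := by
      rw [hdiff]
      calc |bf A (y - p) (y + p)| ≤ s * ‖y - p‖ * ‖y + p‖ := hb
        _ ≤ s * (1/4) * 2 := by
            apply mul_le_mul (mul_le_mul_of_nonneg_left hyp hsnn) hnorm_sum (norm_nonneg _)
            positivity
    calc |qf A y| ≤ |qf A p| + |qf A y - qf A p| := by
          have := abs_sub_abs_le_abs_sub (qf A y) (qf A p)
          have h2 := abs_add_le (qf A p) (qf A y - qf A p)
          calc |qf A y| = |qf A p + (qf A y - qf A p)| := by ring_nf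
            _ ≤ |qf A p| + |qf A y - qf A p| := abs_add_le _ _
      _ ≤ m + s * (1/4) * 2 := add_le_add hqp this
      _ = m + s/2 := by ring
  have hs_le : s ≤ m + s/2 := by
    apply csSup_le hne
    rintro r ⟨y, hy, rfl⟩
    exact hstep y hy
  have hs2m : s ≤ 2*m := by linarith
  intro y hy
  exact (hub y hy).trans hs2m

lemma real_conjTranspose {m n : ℕ} (M : Matrix (Fin m) (Fin n) ℝ) : Mᴴ = Mᵀ := by
  ext i j
  simp [Matrix.conjTranspose_apply, Matrix.transpose_apply]

lemma sum_sq_eq_norm_sq {k : ℕ} (y : EuclideanSpace ℝ (Fin k)) :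
    ∑ i, (y i)^2 = ‖y‖^2 := by
  rw [EuclideanSpace.norm_eq, Real.sq_sqrt (by positivity)]
  exact Finset.sum_congr rfl fun i _ => by rw [Real.norm_eq_abs, sq_abs]

lemma qf_eq_dot {k : ℕ} (X : Matrix (Fin k) (Fin k) ℝ) (y : EuclideanSpace ℝ (Fin k)) :
    qf X y = dotProduct (fun i => y i) (X.mulVec (fun i => y i)) := by
  simp only [dotProduct, Matrix.mulVec, Finset.mul_sum]
  unfold qf
  exact Finset.sum_congr rfl fun i _ => Finset.sum_congr rfl fun j _ => by ring

lemma measure_count {d t : ℕ} (T : Finset (Fin d → Fin t → Bool)) (x : ℝ) (hx : 0 ≤ x)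
    (hcard : (T.card : ℝ) ≤ x * 2^(d*t)) :
    signMeasure d t ↑T ≤ ENNReal.ofReal x := by
  classical
  have hms : MeasurableSet (↑T : Set (Fin d → Fin t → Bool)) :=
    (Set.toFinite _).measurableSet
  have hcardΩ : (Fintype.card (Fin d → Fin t → Bool)) = 2^(d*t) := by
    rw [Fintype.card_fun, Fintype.card_fun]
    rw [Fintype.card_bool, Fintype.card_fin, Fintype.card_fin, ← pow_mul]
    ring_nf
  rw [signMeasure, PMF.toMeasure_apply _ hms]
  have hval : ∀ ω : Fin d → Fin t → Bool,
      (↑T : Set (Fin d → Fin t → Bool)).indicator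
          (⇑(PMF.uniformOfFintype (Fin d → Fin t → Bool))) ω
        = if ω ∈ T then ((2:ℝ≥0∞)^(d*t))⁻¹ else 0 := by
    intro ω
    by_cases h : ω ∈ T
    · rw [Set.indicator_of_mem (by exact_mod_cast h), PMF.uniformOfFintype_apply, if_pos h, hcardΩ]
      norm_num
    · rw [Set.indicator_of_notMem (by exact_mod_cast h), if_neg h]
  rw [tsum_fintype]
  rw [Finset.sum_congr rfl (fun ω _ => hval ω)]
  rw [Finset.sum_ite_mem, Finset.univ_inter, Finset.sum_const, nsmul_eq_mul]
  have h2 : ((2:ℝ≥0∞)^(d*t)) ≠ 0 := by positivity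
  have h3 : ((2:ℝ≥0∞)^(d*t)) ≠ ⊤ := by
    exact ENNReal.pow_ne_top (by norm_num)
  calc (T.card : ℝ≥0∞) * ((2:ℝ≥0∞)^(d*t))⁻¹
      ≤ ENNReal.ofReal (x * 2^(d*t)) * ((2:ℝ≥0∞)^(d*t))⁻¹ := by
        apply mul_le_mul_left
        rw [← ENNReal.ofReal_natCast]
        exact ENNReal.ofReal_le_ofReal hcard
    _ = ENNReal.ofReal x * (((2:ℝ≥0∞)^(d*t)) * ((2:ℝ≥0∞)^(d*t))⁻¹) := by
        rw [ENNReal.ofReal_mul hx]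
        rw [show ENNReal.ofReal ((2:ℝ)^(d*t)) = (2:ℝ≥0∞)^(d*t) by
          rw [ENNReal.ofReal_pow (by norm_num)]
          norm_num]
        rw [mul_assoc]
    _ = ENNReal.ofReal x := by
        rw [ENNReal.mul_inv_cancel h2 h3, mul_one]

lemma deterministic {d t k : ℕ} (hk : 1 ≤ k) (ht : 1 ≤ t)
    (V : Matrix (Fin d) (Fin k) ℝ) (hV : Vᵀ * V = 1)
    (ε : ℝ) (hε : 0 < ε) (hε3 : ε < 1/3)
    (F : Finset (EuclideanSpace ℝ (Fin k)))
    (hFnorm : ∀ p ∈ F, ‖p‖ = 1)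
    (hFnet : ∀ y : EuclideanSpace ℝ (Fin k), ‖y‖ = 1 → ∃ p ∈ F, ‖y - p‖ ≤ 1/4)
    (ω : Fin d → Fin t → Bool)
    (hgood : ∀ p ∈ F, |Tval (V.mulVec (fun i => p i)) ω - t| ≤ t*(ε/2)) :
    ∀ i : Fin k, |1 - singVals (Vᵀ * signMatrix d t ω) i| ≤ ε := by
  classical
  have htpos : (0:ℝ) < t := by exact_mod_cast ht
  have hst : (0:ℝ) < Real.sqrt t := Real.sqrt_pos.mpr htpos
  set M := Vᵀ * signMatrix d t ω with hM
  set B := M * Mᴴ with hBdef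
  have hB : B.IsHermitian := Matrix.isHermitian_mul_conjTranspose_self M
  set A := B - 1 with hAdef
  have hAsym : Aᵀ = A := by
    rw [hAdef, Matrix.transpose_sub, Matrix.transpose_one, ← real_conjTranspose, hB.eq]
  -- column formula
  have hcol : ∀ (y : EuclideanSpace ℝ (Fin k)) (j : Fin t),
      (Mᵀ.mulVec (fun i => y i)) j
        = zval (V.mulVec (fun i => y i)) (fun i => ω i j) / Real.sqrt t := by
    intro y j
    have hMentry : ∀ a : Fin k, M a j = ∑ i : Fin d, V i a * (sg (ω i j) / Real.sqrt t) := by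
      intro a
      rw [hM, Matrix.mul_apply]
      refine Finset.sum_congr rfl fun i _ => ?_
      rw [Matrix.transpose_apply]
      congr 1
    calc (Mᵀ.mulVec (fun i => y i)) j
        = ∑ a : Fin k, M a j * y a := by
          rw [Matrix.mulVec, dotProduct]
          exact Finset.sum_congr rfl fun a _ => by rw [Matrix.transpose_apply]
      _ = ∑ a : Fin k, ∑ i : Fin d, V i a * (sg (ω i j) / Real.sqrt t) * y a := by
          refine Finset.sum_congr rfl fun a _ => ?_
          rw [hMentry a, Finset.sum_mul]
      _ = ∑ i : Fin d, ∑ a : Fin k, V i a * (sg (ω i j) / Real.sqrt t) * y a :=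
          Finset.sum_comm
      _ = ∑ i : Fin d, (∑ a : Fin k, V i a * y a) * sg (ω i j) / Real.sqrt t := by
          refine Finset.sum_congr rfl fun i _ => ?_
          rw [Finset.sum_mul, Finset.sum_div]
          exact Finset.sum_congr rfl fun a _ => by ring
      _ = zval (V.mulVec (fun i => y i)) (fun i => ω i j) / Real.sqrt t := by
          rw [zval, Finset.sum_div]
          refine Finset.sum_congr rfl fun i _ => ?_
          rw [Matrix.mulVec, dotProduct]
  -- quadratic form identity
  have hqA : ∀ y : EuclideanSpace ℝ (Fin k),
      qf A y = Tval (V.mulVec (fun i => y i)) ω / t - ‖y‖^2 := by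
    intro y
    have hdotB : dotProduct (fun i => y i) (B.mulVec (fun i => y i))
        = Tval (V.mulVec (fun i => y i)) ω / t := by
      have h1 : B.mulVec (fun i => y i) = M.mulVec (Mᴴ.mulVec (fun i => y i)) := by
        rw [hBdef, ← Matrix.mulVec_mulVec]
      rw [h1, Matrix.dotProduct_mulVec, real_conjTranspose, ← Matrix.mulVec_transpose]
      have h2 : ∀ j, (Mᵀ.mulVec (fun i => y i)) j ^ 2
          = zval (V.mulVec (fun i => y i)) (fun i => ω i j) ^ 2 / t := by
        intro j
        rw [hcol y j, div_pow, Real.sq_sqrt htpos.le]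
      calc dotProduct (Mᵀ.mulVec (fun i => y i)) (Mᵀ.mulVec (fun i => y i))
          = ∑ j, (Mᵀ.mulVec (fun i => y i)) j ^ 2 := by
            rw [dotProduct]
            exact Finset.sum_congr rfl fun j _ => (sq _).symm
        _ = ∑ j, zval (V.mulVec (fun i => y i)) (fun i => ω i j) ^ 2 / t :=
            Finset.sum_congr rfl fun j _ => h2 j
        _ = Tval (V.mulVec (fun i => y i)) ω / t := by
            rw [Tval, Finset.sum_div]
    have hdot1 : dotProduct (fun i => y i) ((1 : Matrix (Fin k) (Fin k) ℝ).mulVec (fun i => y i))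
        = ‖y‖^2 := by
      rw [Matrix.one_mulVec, dotProduct, ← sum_sq_eq_norm_sq]
      exact Finset.sum_congr rfl fun i _ => (sq _).symm
    rw [qf_eq_dot, hAdef, Matrix.sub_mulVec, dotProduct_sub, hdotB, hdot1]
  -- net control
  have hnet_ctrl : ∀ p ∈ F, |qf A p| ≤ ε/2 := by
    intro p hp
    rw [hqA p, hFnorm p hp]
    have h1 := hgood p hp
    rw [one_pow]
    have h2 : Tval (V.mulVec (fun i => p i)) ω / t - 1
        = (Tval (V.mulVec (fun i => p i)) ω - t) / t := by
      field_simp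
    rw [h2, abs_div, abs_of_pos htpos, div_le_iff₀ htpos]
    calc |Tval (V.mulVec (fun i => p i)) ω - t| ≤ t*(ε/2) := h1
      _ = ε/2 * t := by ring
  -- all unit vectors
  have hall := quad_net_bound hk A hAsym F hFnorm hFnet (ε/2) (by linarith) hnet_ctrl
  -- eigenvalues
  intro i
  set y : EuclideanSpace ℝ (Fin k) := hB.eigenvectorBasis i with hy
  have hy1 : ‖y‖ = 1 := hB.eigenvectorBasis.orthonormal.1 i
  have heig := hB.mulVec_eigenvectorBasis i
  set lam : ℝ := hB.eigenvalues i with hlam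
  have hqy : qf A y = lam - 1 := by
    rw [qf_eq_dot, hAdef, Matrix.sub_mulVec, dotProduct_sub]
    have h1 : B.mulVec (fun i => y i) = lam • (fun i => y i) := by
      exact heig
    rw [h1]
    have h2 : dotProduct (fun i => y i) (lam • (fun i => y i)) = lam := by
      rw [dotProduct_smul, smul_eq_mul]
      have : dotProduct (fun i => y i) (fun i => y i) = ‖y‖^2 := by
        rw [dotProduct, ← sum_sq_eq_norm_sq]
        exact Finset.sum_congr rfl fun a _ => (sq _).symm
      rw [this, hy1]
      norm_num
    rw [h2]
    have h3 : dotProduct (fun i => y i) ((1 : Matrix (Fin k) (Fin k) ℝ).mulVec (fun i => y i))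
        = ‖y‖^2 := by
      rw [Matrix.one_mulVec, dotProduct, ← sum_sq_eq_norm_sq]
      exact Finset.sum_congr rfl fun a _ => (sq _).symm
    rw [h3, hy1]
    norm_num
  have hlambound : |lam - 1| ≤ ε := by
    rw [← hqy]
    calc |qf A y| ≤ 2 * (ε/2) := hall y hy1
      _ = ε := by ring
  have hsing : singVals M i = Real.sqrt lam := rfl
  rw [hsing]
  have hlampos : (0:ℝ) ≤ lam := by
    have : 1 - ε ≤ lam := by
      have := abs_le.mp hlambound
      linarith [this.1]
    linarith
  have hs := Real.sq_sqrt hlampos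
  have hsnn := Real.sqrt_nonneg lam
  have hup : Real.sqrt lam ≤ 1 + ε := by
    nlinarith [abs_le.mp hlambound]
  have hlo : 1 - ε ≤ Real.sqrt lam := by
    nlinarith [abs_le.mp hlambound]
  rw [abs_le]
  constructor <;> linarith

lemma mulVec_sq_sum {d k : ℕ} (V : Matrix (Fin d) (Fin k) ℝ) (hV : Vᵀ * V = 1)
    (y : EuclideanSpace ℝ (Fin k)) :
    ∑ i, (V.mulVec (fun a => y a)) i ^ 2 = ‖y‖^2 := by
  have h0 : ∑ i, (V.mulVec (fun a => y a)) i ^ 2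
      = dotProduct (V.mulVec (fun a => y a)) (V.mulVec (fun a => y a)) := by
    rw [dotProduct]
    exact Finset.sum_congr rfl fun i _ => sq _
  rw [h0, Matrix.dotProduct_mulVec, ← Matrix.mulVec_transpose, Matrix.mulVec_mulVec, hV,
    Matrix.one_mulVec, dotProduct, ← sum_sq_eq_norm_sq]
  exact Finset.sum_congr rfl fun i _ => (sq _).symm

lemma union_arith (k : ℕ) (hk : 1 ≤ k) (X : ℝ) (hX : 16384 * k ≤ X) :
    (9:ℝ)^k * (2 * Real.exp (-X/1024)) ≤ 0.01 := by
  have he1 : (2:ℝ) ≤ Real.exp 1 := by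
    have := Real.add_one_le_exp 1
    linarith
  have he16 : (65536:ℝ) ≤ Real.exp 16 := by
    have h1 : Real.exp 16 = Real.exp 1 ^ (16:ℕ) := by
      rw [← Real.exp_nat_mul]
      norm_num
    have h2 : (2:ℝ)^(16:ℕ) ≤ Real.exp 1 ^ (16:ℕ) :=
      pow_le_pow_left₀ (by norm_num) he1 16
    rw [h1]
    calc (65536:ℝ) = 2^(16:ℕ) := by norm_num
      _ ≤ _ := h2
  have hexp_le : Real.exp (-X/1024) ≤ Real.exp (-(16*k)) := by
    apply Real.exp_le_exp.mpr
    have : (16:ℝ)*k ≤ X/1024 := by linarith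
    linarith
  have hsplit : Real.exp (-(16*(k:ℝ))) = (Real.exp (-16))^k := by
    rw [← Real.exp_nat_mul]
    congr 1
    ring
  set b : ℝ := 9 * Real.exp (-16) with hb
  have hbnn : 0 ≤ b := by positivity
  have hbsmall : b ≤ 9/65536 := by
    rw [hb]
    have h1 : Real.exp (-16) ≤ 1/65536 := by
      rw [Real.exp_neg]
      have h2 : (65536:ℝ)⁻¹ = 1/65536 := by norm_num
      rw [← h2]
      exact inv_anti₀ (by norm_num) he16
    linarith
  have hb1 : b ≤ 1 := hbsmall.trans (by norm_num)
  have hpow : (9:ℝ)^k * (Real.exp (-16))^k = b^k := by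
    rw [hb, mul_pow]
  calc (9:ℝ)^k * (2 * Real.exp (-X/1024))
      ≤ (9:ℝ)^k * (2 * Real.exp (-(16*k))) := by
        apply mul_le_mul_of_nonneg_left _ (by positivity)
        linarith
    _ = 2 * b^k := by rw [hsplit, ← hpow]; ring
    _ ≤ 2 * b^1 := by
        apply mul_le_mul_of_nonneg_left (pow_le_pow_of_le_one hbnn hb1 hk) (by norm_num)
    _ ≤ 2 * (9/65536) := by
        rw [pow_one]
        linarith
    _ ≤ 0.01 := by norm_num


end

/-- singular value preservation under random sign projection. -/
theorem statement16 :
    ∃ c : ℝ, 0 < c ∧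
      ∀ (ε : ℝ), 0 < ε → ε < 1 / 3 →
        ∀ (k : ℕ), 1 ≤ k →
          ∀ (d t : ℕ) (V : Matrix (Fin d) (Fin k) ℝ), Vᵀ * V = 1 →
            c * k / ε ^ 2 ≤ (t : ℝ) →
            ENNReal.ofReal 0.99 ≤ signMeasure d t
              {ω | ∀ i : Fin k, |1 - singVals (Vᵀ * signMatrix d t ω) i| ≤ ε} := by
  classical
  refine ⟨16384, by norm_num, ?_⟩
  intro ε hε hε3 k hk d t V hV ht
  have hε2 : (0:ℝ) < ε^2 := by positivity
  have hkR : (1:ℝ) ≤ k := by exact_mod_cast hk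
  have htX : 16384 * (k:ℝ) ≤ (t:ℝ) * ε^2 := by
    rw [div_le_iff₀ hε2] at ht
    linarith
  have ht1 : 1 ≤ t := by
    by_contra h
    push_neg at h
    interval_cases t
    simp at htX
    nlinarith
  have htpos : (0:ℝ) < t := by exact_mod_cast ht1
  obtain ⟨F, hFnorm, hFcard, hFnet⟩ := net_exists k hk
  set δ : ℝ := ε/2 with hδ
  have hδpos : 0 < δ := by positivity
  have hδ1 : δ ≤ 1 := by rw [hδ]; linarith
  -- event finsets
  set Sup : EuclideanSpace ℝ (Fin k) → Finset (Fin d → Fin t → Bool) :=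
    fun p => Finset.univ.filter
      (fun ω => (t:ℝ)*δ ≤ 1*(Tval (V.mulVec (fun a => p a)) ω - t)) with hSup
  set Sdn : EuclideanSpace ℝ (Fin k) → Finset (Fin d → Fin t → Bool) :=
    fun p => Finset.univ.filter
      (fun ω => (t:ℝ)*δ ≤ (-1)*(Tval (V.mulVec (fun a => p a)) ω - t)) with hSdn
  have hw : ∀ p ∈ F, ∑ i, (V.mulVec (fun a => p a)) i ^ 2 = 1 := by
    intro p hp
    rw [mulVec_sq_sum V hV p, hFnorm p hp]
    norm_num
  have hcard_up : ∀ p ∈ F, ((Sup p).card : ℝ) ≤ 2^(d*t) * Real.exp (-((t:ℝ)*δ^2)/256) :=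
    fun p hp => chernoff d t _ (hw p hp) δ hδpos hδ1 1 (Or.inl rfl)
  have hcard_dn : ∀ p ∈ F, ((Sdn p).card : ℝ) ≤ 2^(d*t) * Real.exp (-((t:ℝ)*δ^2)/256) :=
    fun p hp => chernoff d t _ (hw p hp) δ hδpos hδ1 (-1) (Or.inr rfl)
  set G : Set (Fin d → Fin t → Bool) :=
    {ω | ∀ i : Fin k, |1 - singVals (Vᵀ * signMatrix d t ω) i| ≤ ε} with hG
  have hGm : MeasurableSet G := (Set.toFinite _).measurableSet
  -- complement inclusion
  have hsub : Gᶜ ⊆ ⋃ p ∈ F, (↑(Sup p ∪ Sdn p) : Set (Fin d → Fin t → Bool)) := by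
    intro ω hω
    by_contra hcon
    simp only [Set.mem_iUnion, not_exists] at hcon
    apply hω
    rw [hG]
    apply deterministic hk ht1 V hV ε hε hε3 F hFnorm hFnet ω
    intro p hp
    by_contra hbad
    apply hcon p hp
    push_neg at hbad
    have : (t:ℝ)*(ε/2) ≤ |Tval (V.mulVec (fun a => p a)) ω - t| := hbad.le
    rcases abs_cases (Tval (V.mulVec (fun a => p a)) ω - t) with ⟨habs, _⟩ | ⟨habs, _⟩
    · have : ω ∈ Sup p := by
        rw [hSup, Finset.mem_filter]
        refine ⟨Finset.mem_univ _, ?_⟩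
        rw [one_mul, hδ]
        rw [habs] at this
        exact this
      exact_mod_cast Finset.mem_union_left _ this
    · have : ω ∈ Sdn p := by
        rw [hSdn, Finset.mem_filter]
        refine ⟨Finset.mem_univ _, ?_⟩
        rw [habs] at this
        rw [hδ]
        linarith
      exact_mod_cast Finset.mem_union_right _ this
  -- measure bound on bad sets
  have hBp : ∀ p ∈ F, signMeasure d t (↑(Sup p ∪ Sdn p))
      ≤ ENNReal.ofReal (2 * Real.exp (-((t:ℝ)*δ^2)/256)) := by
    intro p hp
    apply measure_count
    · positivity
    · calc (((Sup p ∪ Sdn p)).card : ℝ)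
          ≤ ((Sup p).card : ℝ) + ((Sdn p).card : ℝ) := by exact_mod_cast Finset.card_union_le _ _
        _ ≤ 2^(d*t) * Real.exp (-((t:ℝ)*δ^2)/256) + 2^(d*t) * Real.exp (-((t:ℝ)*δ^2)/256) :=
            add_le_add (hcard_up p hp) (hcard_dn p hp)
        _ = 2 * Real.exp (-((t:ℝ)*δ^2)/256) * 2^(d*t) := by ring
  have hcompl : signMeasure d t Gᶜ ≤ ENNReal.ofReal 0.01 := by
    calc signMeasure d t Gᶜ
        ≤ signMeasure d t (⋃ p ∈ F, (↑(Sup p ∪ Sdn p) : Set (Fin d → Fin t → Bool))) :=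
          measure_mono hsub
      _ ≤ ∑ p ∈ F, signMeasure d t (↑(Sup p ∪ Sdn p)) := measure_biUnion_finset_le _ _
      _ ≤ ∑ p ∈ F, ENNReal.ofReal (2 * Real.exp (-((t:ℝ)*δ^2)/256)) :=
          Finset.sum_le_sum hBp
      _ = F.card • ENNReal.ofReal (2 * Real.exp (-((t:ℝ)*δ^2)/256)) := by
          rw [Finset.sum_const]
      _ ≤ ENNReal.ofReal 0.01 := by
          rw [nsmul_eq_mul, ← ENNReal.ofReal_natCast, ← ENNReal.ofReal_mul (by positivity)]
          apply ENNReal.ofReal_le_ofReal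
          have harg : -((t:ℝ)*δ^2)/256 = -((t:ℝ)*ε^2)/1024 := by
            rw [hδ]; ring
          rw [harg]
          calc (F.card : ℝ) * (2 * Real.exp (-((t:ℝ)*ε^2)/1024))
              ≤ (9:ℝ)^k * (2 * Real.exp (-((t:ℝ)*ε^2)/1024)) := by
                apply mul_le_mul_of_nonneg_right _ (by positivity)
                exact_mod_cast hFcard
            _ ≤ 0.01 := union_arith k hk ((t:ℝ)*ε^2) htX
  -- conclude
  haveI hprob : IsProbabilityMeasure (signMeasure d t) :=
    PMF.toMeasure.isProbabilityMeasure (PMF.uniformOfFintype (Fin d → Fin t → Bool))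
  have hGc : signMeasure d t G = 1 - signMeasure d t Gᶜ := by
    have := prob_compl_eq_one_sub (μ := signMeasure d t) hGm.compl
    rw [compl_compl] at this
    exact this
  rw [hGc]
  calc ENNReal.ofReal 0.99 ≤ 1 - ENNReal.ofReal 0.01 := by
        rw [← ENNReal.ofReal_one, ← ENNReal.ofReal_sub _ (by norm_num)]
        apply ENNReal.ofReal_le_ofReal
        norm_num
    _ ≤ 1 - signMeasure d t Gᶜ := tsub_le_tsub_left hcompl 1
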